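/- arXiv:2107.07185 — 2 statements merged into one kernel-verified Lean document; each statement's English description precedes it below -/
import Mathlib

section
/- The Takagi-type function T(x) = Σ_{n=0}^∞ γ^n Φ(2^n x), where Φ(y) = dist(y, ℤ) and γ ∈ (1/2, 1), is Hölder continuous on [0,1] with exponent H = log γ / log(1/2), i.e. there is a constant C such that |T(x) - T(y)| ≤ C|x-y|^H for all x, y ∈ [0,1]. -/
set_option maxHeartbeats 1000000


open Set

noncomputable section

/-- Distance to the nearest integer. -/
def Phi (y : ℝ) : ℝ := |y - round y|

/-- The Takagi-type function with roughness parameter `γ`. -/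
def Tak (γ : ℝ) (x : ℝ) : ℝ := ∑' n : ℕ, γ ^ n * Phi (2 ^ n * x)

lemma Phi_nonneg (y : ℝ) : 0 ≤ Phi y := abs_nonneg _

lemma Phi_le_half (y : ℝ) : Phi y ≤ 1/2 := abs_sub_round y

lemma Phi_lip (a b : ℝ) : |Phi a - Phi b| ≤ |a - b| := by
  have key : ∀ u v : ℝ, Phi u - Phi v ≤ |u - v| := by
    intro u v
    have h1 : Phi u ≤ |u - (round v : ℝ)| := round_le u (round v)
    have h2 : |u - (round v : ℝ)| - |v - (round v : ℝ)| ≤ |u - v| := by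
      have := abs_sub_abs_le_abs_sub (u - (round v : ℝ)) (v - (round v : ℝ))
      simpa using this
    have h3 : Phi v = |v - (round v : ℝ)| := rfl
    linarith
  rw [abs_sub_le_iff]
  exact ⟨key a b, by simpa [abs_sub_comm] using key b a⟩

lemma tak_summable {γ : ℝ} (hγ0 : 0 ≤ γ) (hγ1 : γ < 1) (x : ℝ) :
    Summable (fun n : ℕ => γ ^ n * Phi (2 ^ n * x)) := by
  apply Summable.of_nonneg_of_le
    (fun n => mul_nonneg (pow_nonneg hγ0 n) (Phi_nonneg _))
    (fun n => ?_) (summable_geometric_of_lt_one hγ0 hγ1)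
  calc γ ^ n * Phi (2 ^ n * x) ≤ γ ^ n * 1 :=
        mul_le_mul_of_nonneg_left (le_trans (Phi_le_half _) (by norm_num))
          (pow_nonneg hγ0 n)
    _ = γ ^ n := mul_one _

/-- `T` is Hölder continuous on `[0,1]` with exponent `H = log γ / log (1/2)`. -/
theorem stmt0 (γ : ℝ) (hγ : γ ∈ Set.Ioo (1/2 : ℝ) 1) :
    ∃ C : ℝ, ∀ x ∈ Set.Icc (0:ℝ) 1, ∀ y ∈ Set.Icc (0:ℝ) 1,
      |Tak γ x - Tak γ y| ≤ C * |x - y| ^ (Real.log γ / Real.log (1/2)) := by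
  obtain ⟨hγhalf, hγ1⟩ := hγ
  have hγ0 : (0:ℝ) < γ := lt_trans (by norm_num) hγhalf
  set H : ℝ := Real.log γ / Real.log (1/2) with hHdef
  have hlogγ : Real.log γ < 0 := Real.log_neg hγ0 hγ1
  have hloghalf : Real.log (1/2 : ℝ) < 0 := Real.log_neg (by norm_num) (by norm_num)
  have hH0 : 0 < H := div_pos_of_neg_of_neg hlogγ hloghalf
  have hhalfH : (1/2 : ℝ) ^ H = γ := by
    rw [hHdef, Real.rpow_def_of_pos (by norm_num : (0:ℝ) < 1/2)]
    rw [mul_comm, div_mul_cancel₀ _ (ne_of_lt hloghalf)]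
    exact Real.exp_log hγ0
  have hK0 : 0 ≤ 1/(2*γ-1) + 1/(1-γ) := by
    have : (0:ℝ) < 2*γ - 1 := by linarith
    have : (0:ℝ) < 1 - γ := by linarith
    positivity
  refine ⟨(1/(2*γ-1) + 1/(1-γ))/γ, ?_⟩
  intro x hx y hy
  by_cases hxy : x = y
  · simp [hxy, Real.zero_rpow (ne_of_gt hH0)]
  set d := |x - y| with hd
  have hd0 : 0 < d := abs_pos.2 (sub_ne_zero.2 hxy)
  have hd1 : d ≤ 1 := by
    rw [hd, abs_sub_le_iff]
    constructor <;> [linarith [hx.1, hx.2, hy.1, hy.2]; linarith [hx.1, hx.2, hy.1, hy.2]]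
  -- choose N with (1/2)^(N+1) < d ≤ (1/2)^N
  have hex : ∃ n : ℕ, (1/2:ℝ)^(n+1) < d := by
    obtain ⟨n, hn⟩ := exists_pow_lt_of_lt_one hd0 (by norm_num : (1/2:ℝ) < 1)
    exact ⟨n, lt_of_le_of_lt
      (pow_le_pow_of_le_one (by norm_num) (by norm_num) (Nat.le_succ n)) hn⟩
  set N := Nat.find hex with hNdef
  have hN1 : (1/2:ℝ)^(N+1) < d := Nat.find_spec hex
  have hN2 : d ≤ (1/2:ℝ)^N := by
    rcases Nat.eq_zero_or_pos N with h0 | hpos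
    · rw [h0]; simpa using hd1
    · obtain ⟨k, hk⟩ := Nat.exists_eq_succ_of_ne_zero (Nat.pos_iff_ne_zero.1 hpos)
      have := Nat.find_min hex (m := k) (by omega)
      push_neg at this
      simpa [hk] using this
  have h2N : (2:ℝ)^N * d ≤ 1 := by
    have hNpow : d ≤ ((2:ℝ)^N)⁻¹ := by
      have : ((1:ℝ)/2)^N = ((2:ℝ)^N)⁻¹ := by
        rw [one_div, inv_pow]
      linarith [hN2, this ▸ hN2]
    calc (2:ℝ)^N * d ≤ (2:ℝ)^N * ((2:ℝ)^N)⁻¹ :=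
          mul_le_mul_of_nonneg_left hNpow (by positivity)
      _ = 1 := mul_inv_cancel₀ (by positivity)
  -- summability
  have hgeo : Summable (fun n : ℕ => γ ^ n) := summable_geometric_of_lt_one hγ0.le hγ1
  have hsx := tak_summable hγ0.le hγ1 x
  have hsy := tak_summable hγ0.le hγ1 y
  set b : ℕ → ℝ := fun n => γ ^ n * min ((2:ℝ)^n * d) 1 with hbdef
  have hb_nonneg : ∀ n, 0 ≤ b n := fun n =>
    mul_nonneg (pow_nonneg hγ0.le n) (le_min (by positivity) zero_le_one)
  have hb_le_geo : ∀ n, b n ≤ γ ^ n := fun n => by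
    calc b n ≤ γ ^ n * 1 :=
          mul_le_mul_of_nonneg_left (min_le_right _ _) (pow_nonneg hγ0.le n)
      _ = γ ^ n := mul_one _
  have hb_sum : Summable b := Summable.of_nonneg_of_le hb_nonneg hb_le_geo hgeo
  have hterm : ∀ n : ℕ,
      |γ ^ n * Phi (2 ^ n * x) - γ ^ n * Phi (2 ^ n * y)| ≤ b n := by
    intro n
    rw [← mul_sub, abs_mul, abs_pow, abs_of_pos hγ0]
    refine mul_le_mul_of_nonneg_left (le_min ?_ ?_) (pow_nonneg hγ0.le n)
    · calc |Phi (2 ^ n * x) - Phi (2 ^ n * y)| ≤ |2 ^ n * x - 2 ^ n * y| :=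
            Phi_lip _ _
        _ = (2:ℝ)^n * d := by rw [← mul_sub, abs_mul, abs_of_pos (by positivity), hd]
    · have := Phi_nonneg (2 ^ n * x)
      have := Phi_le_half (2 ^ n * x)
      have := Phi_nonneg (2 ^ n * y)
      have := Phi_le_half (2 ^ n * y)
      rw [abs_sub_le_iff]; constructor <;> linarith
  have hdiff_sum : Summable
      (fun n : ℕ => |γ ^ n * Phi (2 ^ n * x) - γ ^ n * Phi (2 ^ n * y)|) :=
    Summable.of_nonneg_of_le (fun n => abs_nonneg _) hterm hb_sum
  have h1 : |Tak γ x - Tak γ y| ≤ ∑' n, b n := by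
    rw [Tak, Tak, ← Summable.tsum_sub hsx hsy]
    calc |∑' n, (γ ^ n * Phi (2 ^ n * x) - γ ^ n * Phi (2 ^ n * y))|
        ≤ ∑' n, |γ ^ n * Phi (2 ^ n * x) - γ ^ n * Phi (2 ^ n * y)| := by
          simpa [Real.norm_eq_abs] using norm_tsum_le_tsum_norm
            (f := fun n : ℕ => γ ^ n * Phi (2 ^ n * x) - γ ^ n * Phi (2 ^ n * y))
            (by simpa [Real.norm_eq_abs] using hdiff_sum)
      _ ≤ ∑' n, b n := Summable.tsum_le_tsum hterm hdiff_sum hb_sum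
  -- split the bound sum at N
  have hsplit : ∑' n, b n =
      (∑ i ∈ Finset.range N, b i) + ∑' n : ℕ, b (n + N) :=
    (Summable.sum_add_tsum_nat_add N hb_sum).symm
  -- head
  have hhead : (∑ i ∈ Finset.range N, b i) ≤ γ ^ N / (2*γ - 1) := by
    have hne : (2*γ : ℝ) ≠ 1 := by intro h; linarith
    have step : ∀ i ∈ Finset.range N, b i ≤ (2*γ)^i * d := by
      intro i _
      calc b i ≤ γ ^ i * ((2:ℝ)^i * d) :=
            mul_le_mul_of_nonneg_left (min_le_left _ _) (pow_nonneg hγ0.le i)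
        _ = (2*γ)^i * d := by rw [mul_pow]; ring
    calc (∑ i ∈ Finset.range N, b i) ≤ ∑ i ∈ Finset.range N, (2*γ)^i * d :=
          Finset.sum_le_sum step
      _ = ((2*γ)^N - 1)/(2*γ - 1) * d := by
          rw [← Finset.sum_mul, geom_sum_eq hne]
      _ ≤ γ ^ N / (2*γ - 1) := by
          rw [div_mul_eq_mul_div, div_le_div_iff_of_pos_right (by linarith : (0:ℝ) < 2*γ-1)]
          have e1 : (2*γ)^N * d = γ^N * ((2:ℝ)^N * d) := by rw [mul_pow]; ring
          have e2 : γ^N * ((2:ℝ)^N * d) ≤ γ^N * 1 :=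
            mul_le_mul_of_nonneg_left h2N (pow_nonneg hγ0.le N)
          nlinarith [hd0.le]
  -- tail
  have htail : (∑' n : ℕ, b (n + N)) ≤ γ ^ N * (1 - γ)⁻¹ := by
    have hbs : Summable (fun n : ℕ => b (n + N)) := (summable_nat_add_iff N).2 hb_sum
    have hgs : Summable (fun n : ℕ => γ ^ n * γ ^ N) := hgeo.mul_right _
    calc (∑' n : ℕ, b (n + N)) ≤ ∑' n : ℕ, γ ^ n * γ ^ N := by
          refine Summable.tsum_le_tsum (fun n => ?_) hbs hgs
          calc b (n + N) ≤ γ ^ (n + N) := hb_le_geo _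
            _ = γ ^ n * γ ^ N := pow_add γ n N
      _ = (∑' n : ℕ, γ ^ n) * γ ^ N := tsum_mul_right
      _ = (1 - γ)⁻¹ * γ ^ N := by rw [tsum_geometric_of_lt_one hγ0.le hγ1]
      _ = γ ^ N * (1 - γ)⁻¹ := mul_comm _ _
  -- Hölder comparison
  have hγN : γ ^ N ≤ d ^ H / γ := by
    have e : ((1/2:ℝ)^(N+1)) ^ H = γ^(N+1) := by
      rw [← Real.rpow_natCast (1/2 : ℝ) (N+1), ← Real.rpow_mul (by norm_num),
        mul_comm, Real.rpow_mul (by norm_num), hhalfH, Real.rpow_natCast]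
    have hle : γ^(N+1) ≤ d ^ H := by
      rw [← e]
      exact Real.rpow_le_rpow (by positivity) hN1.le hH0.le
    rw [le_div_iff₀ hγ0, ← pow_succ]
    exact hle
  -- put everything together
  have hfinal : |Tak γ x - Tak γ y| ≤ γ ^ N * (1/(2*γ-1) + 1/(1-γ)) := by
    rw [hsplit] at h1
    have heq : γ ^ N / (2*γ - 1) + γ ^ N * (1 - γ)⁻¹ = γ ^ N * (1/(2*γ-1) + 1/(1-γ)) := by
      ring
    linarith
  calc |Tak γ x - Tak γ y| ≤ γ ^ N * (1/(2*γ-1) + 1/(1-γ)) := hfinal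
    _ ≤ (d ^ H / γ) * (1/(2*γ-1) + 1/(1-γ)) := mul_le_mul_of_nonneg_right hγN hK0
    _ = (1/(2*γ-1) + 1/(1-γ))/γ * d ^ H := by ring
end
end

section
/- The Hölder exponent log γ / log(1/2) of the Takagi-type function T is sharp: for x_n = 0 and y_n = 2^{-n}, one has |T(x_n) - T(y_n)| ≥ c · |x_n - y_n|^{log γ / log(1/2)} for some constant c > 0 independent of n. -/
open Set

noncomputable section

lemma Phi_intCast (m : ℤ) : Phi (m : ℝ) = 0 := by
  simp [Phi]

lemma Phi_of_le_half {y : ℝ} (h0 : 0 ≤ y) (h : y ≤ 1/2) : Phi y = y := by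
  rcases lt_or_eq_of_le h with h' | h'
  · have : round y = 0 := by
      rw [round_eq]
      have : ⌊y + 1/2⌋ = 0 := by
        apply Int.floor_eq_zero_iff.2
        constructor <;> simp at * <;> linarith
      simpa using this
    simp [Phi, this, abs_of_nonneg h0]
  · subst h'
    have hr : round ((1:ℝ)/2) = 1 := by norm_num [round_eq]
    norm_num [Phi, hr]

lemma Tak_zero (γ : ℝ) : Tak γ 0 = 0 := by
  simp [Tak, show Phi 0 = 0 by simp [Phi]]

lemma Tak_pow (γ : ℝ) (n : ℕ) :
    Tak γ ((1/2 : ℝ) ^ n) = ∑ k ∈ Finset.range n, γ ^ k * (2 ^ k * (1/2 : ℝ) ^ n) := by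
  rw [Tak, tsum_eq_sum (s := Finset.range n)]
  · apply Finset.sum_congr rfl
    intro k hk
    rw [Finset.mem_range] at hk
    congr 1
    have h1 : (2:ℝ) ^ k * (1/2 : ℝ) ^ n = (1/2 : ℝ) ^ (n - k) := by
      rw [show n = k + (n - k) by omega, pow_add]
      field_simp
      rw [Nat.add_sub_cancel_left, ← mul_pow]; norm_num
    have h2 : Phi ((1/2:ℝ) ^ (n-k)) = (1/2:ℝ) ^ (n-k) := by
      apply Phi_of_le_half (by positivity)
      calc ((1:ℝ)/2) ^ (n - k) ≤ (1/2 : ℝ) ^ 1 := by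
            apply pow_le_pow_of_le_one (by norm_num) (by norm_num) (by omega)
         _ = 1/2 := pow_one _
    rw [h1, h2, ← h1]
  · intro k hk
    rw [Finset.mem_range, not_lt] at hk
    have h1 : (2:ℝ) ^ k * (1/2 : ℝ) ^ n = ((2 ^ (k - n) : ℤ) : ℝ) := by
      push_cast
      rw [show k = n + (k - n) by omega, pow_add]
      field_simp
      rw [Nat.add_sub_cancel_left, mul_comm ((2:ℝ)^n), mul_assoc, ← mul_pow]; norm_num
    rw [h1, Phi_intCast, mul_zero]

/-- Sharpness of the Hölder exponent `log γ / log (1/2)` along `x_n = 0`, `y_n = 2^{-n}`. -/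
theorem stmt1 (γ : ℝ) (hγ : γ ∈ Set.Ioo (1/2 : ℝ) 1) :
    ∃ c : ℝ, 0 < c ∧ ∀ n : ℕ, 1 ≤ n →
      c * |(0 : ℝ) - (1/2 : ℝ) ^ n| ^ (Real.log γ / Real.log (1/2))
        ≤ |Tak γ 0 - Tak γ ((1/2 : ℝ) ^ n)| := by
  obtain ⟨hγ0, hγ1⟩ := hγ
  have hγpos : 0 < γ := by linarith
  refine ⟨1 / (2 * γ), by positivity, ?_⟩
  intro n hn
  -- rewrite the rpow as γ ^ n
  have hlog2 : Real.log (1/2) ≠ 0 := by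
    rw [show (1:ℝ)/2 = 2⁻¹ by norm_num, Real.log_inv]
    have := Real.log_pos (by norm_num : (1:ℝ) < 2)
    linarith
  have hrpow : |(0 : ℝ) - (1/2 : ℝ) ^ n| ^ (Real.log γ / Real.log (1/2)) = γ ^ n := by
    rw [zero_sub, abs_neg, abs_of_nonneg (by positivity)]
    rw [← Real.rpow_natCast (1/2 : ℝ) n, ← Real.rpow_natCast γ n,
      ← Real.rpow_mul (by norm_num), Real.rpow_def_of_pos (by norm_num : (0:ℝ) < 1/2),
      Real.rpow_def_of_pos hγpos]
    congr 1
    field_simp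
  rw [hrpow, Tak_zero, Tak_pow, zero_sub, abs_neg]
  have hterm : ∀ k ∈ Finset.range n, γ ^ k * (2 ^ k * (1/2 : ℝ) ^ n) = (2*γ) ^ k * (1/2:ℝ)^n := by
    intro k _; rw [mul_pow]; ring
  rw [Finset.sum_congr rfl hterm, ← Finset.sum_mul, geom_sum_eq (by intro h; nlinarith) n]
  have hS : ((2*γ) ^ n - 1) / (2*γ - 1) * (1/2:ℝ)^n = (γ ^ n - (1/2:ℝ)^n) / (2*γ - 1) := by
    field_simp
    rw [sub_mul, mul_pow, mul_right_comm, ← mul_pow, show (2:ℝ) * (1/2) = 1 by norm_num, one_pow, one_mul]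
    ring
  rw [hS]
  have hkey : (1/2 : ℝ) ^ (n-1) ≤ γ ^ (n-1) :=
    pow_le_pow_left₀ (by norm_num) (le_of_lt hγ0) _
  have hγn : γ ^ n = γ * γ ^ (n-1) := by
    rw [← pow_succ']; congr 1; omega
  have h2n : (1/2 : ℝ) ^ n = (1/2) * (1/2:ℝ) ^ (n-1) := by
    rw [← pow_succ']; congr 1; omega
  have hpos : 0 < (γ ^ n - (1/2:ℝ)^n) / (2*γ - 1) := by
    apply div_pos _ (by linarith)
    rw [hγn, h2n]
    nlinarith [pow_pos hγpos (n-1)]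
  rw [abs_of_pos hpos]
  rw [div_mul_eq_mul_div, div_le_div_iff₀ (by positivity) (by linarith), one_mul]
  rw [hγn, h2n]
  nlinarith [pow_pos hγpos (n-1)]
end
end
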